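/- Let n ≥ 1 and let α : ℝ² → Mₙ(ℂ) be a differentiable function such that α(p) is hermitian for every p ∈ ℝ², and such that at every point p the directional derivatives of α in the directions (1,1) and (1,−1) are positive semidefinite matrices. Then for all x = (x⁰, x¹) and y = (y⁰, y¹) in ℝ² with y⁰ − x⁰ ≥ |y¹ − x¹| (i.e. x precedes y in the causal order of the Minkowski plane), the matrix α(y) − α(x) is positive semidefinite. -/

import Mathlib

open scoped Matrix.Norms.L2Operator ComplexOrder

open Matrix in
noncomputable def qf {n : ℕ} (ξ : Fin n → ℂ) : Matrix (Fin n) (Fin n) ℂ →L[ℝ] ℂ :=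
  LinearMap.toContinuousLinearMap
  { toFun := fun M => star ξ ⬝ᵥ M.mulVec ξ
    map_add' := by intro M N; simp [Matrix.add_mulVec, dotProduct_add]
    map_smul' := by intro r M; simp [Matrix.smul_mulVec, dotProduct_smul] }

lemma qf_apply {n : ℕ} (ξ : Fin n → ℂ) (M : Matrix (Fin n) (Fin n) ℂ) :
    qf ξ M = dotProduct (star ξ) (M.mulVec ξ) := rfl

lemma star_quad {n : ℕ} {M : Matrix (Fin n) (Fin n) ℂ} (hM : M.IsHermitian)
    (ξ : Fin n → ℂ) :
    star (dotProduct (star ξ) (M.mulVec ξ)) = dotProduct (star ξ) (M.mulVec ξ) := by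
  simp only [dotProduct, Matrix.mulVec, star_sum, star_mul', Finset.mul_sum]
  rw [Finset.sum_comm]
  refine Finset.sum_congr rfl fun i _ => Finset.sum_congr rfl fun j _ => ?_
  simp only [Pi.star_apply, star_star, hM.apply]
  ring

lemma seg_psd {n : ℕ} (α : ℝ × ℝ → Matrix (Fin n) (Fin n) ℂ)
    (hdiff : Differentiable ℝ α) (hherm : ∀ p, (α p).IsHermitian)
    (d : ℝ × ℝ) (hd : ∀ p, (fderiv ℝ α p d).PosSemidef)
    (x : ℝ × ℝ) (c : ℝ) (hc : 0 ≤ c) :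
    (α (x + c • d) - α x).PosSemidef := by
  rw [Matrix.posSemidef_iff_dotProduct_mulVec]
  constructor
  · exact (hherm _).sub (hherm _)
  · intro ξ
    set g : ℝ → ℂ := fun t => qf ξ (α (x + t • d)) with hg
    have hline : ∀ t : ℝ, HasDerivAt (fun s : ℝ => x + s • d) d t := by
      intro t
      simpa using ((hasDerivAt_id t).smul_const d).const_add x
    have hgd : ∀ t : ℝ, HasDerivAt g (qf ξ (fderiv ℝ α (x + t • d) d)) t := by
      intro t
      have h1 : HasDerivAt (fun s : ℝ => α (x + s • d)) (fderiv ℝ α (x + t • d) d) t :=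
        (hdiff.differentiableAt.hasFDerivAt).comp_hasDerivAt t (hline t)
      exact (qf ξ).hasFDerivAt.comp_hasDerivAt t h1
    set f : ℝ → ℝ := fun t => (g t).re with hf
    have hfd : ∀ t : ℝ, HasDerivAt f ((qf ξ (fderiv ℝ α (x + t • d) d)).re) t := by
      intro t
      exact (Complex.reCLM.hasFDerivAt.comp_hasDerivAt t (hgd t))
    have hmono : Monotone f := by
      apply monotone_of_deriv_nonneg
      · exact fun t => (hfd t).differentiableAt
      · intro t
        rw [(hfd t).deriv]
        have := (hd (x + t • d)).re_dotProduct_nonneg ξ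
        simpa [qf_apply, RCLike.re_to_complex] using this
    have hfc : f 0 ≤ f c := hmono hc
    have hz : dotProduct (star ξ) ((α (x + c • d) - α x).mulVec ξ) = g c - g 0 := by
      simp [hg, qf_apply, Matrix.sub_mulVec, dotProduct_sub]
    rw [hz]
    have him : (g c - g 0).im = 0 := by
      have h1 : (g c).im = 0 := by
        have := star_quad (hherm (x + c • d)) ξ
        rw [← Complex.conj_eq_iff_im]
        simpa [hg, qf_apply] using this
      have h2 : (g 0).im = 0 := by
        have := star_quad (hherm (x + (0:ℝ) • d)) ξ
        rw [← Complex.conj_eq_iff_im]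
        simpa [hg, qf_apply] using this
      simp [Complex.sub_im, h1, h2]
    rw [Complex.le_def]
    constructor
    · simpa [hf, Complex.sub_re] using hfc
    · simpa using him.symm

/-- a differentiable hermitian-matrix-valued function on the Minkowski plane
whose directional derivatives along the null directions `(1,1)` and `(1,−1)` are everywhere
positive semidefinite is non-decreasing (in the Loewner order) along the causal order. -/
theorem causal_monotone_of_null_derivatives_posSemidef
    (n : ℕ) (hn : 1 ≤ n) (α : ℝ × ℝ → Matrix (Fin n) (Fin n) ℂ)
    (hdiff : Differentiable ℝ α)
    (hherm : ∀ p : ℝ × ℝ, (α p).IsHermitian)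
    (hu : ∀ p : ℝ × ℝ, (fderiv ℝ α p (1, 1)).PosSemidef)
    (hv : ∀ p : ℝ × ℝ, (fderiv ℝ α p (1, -1)).PosSemidef)
    (x y : ℝ × ℝ) (hxy : |y.2 - x.2| ≤ y.1 - x.1) :
    (α y - α x).PosSemidef := by
  set a : ℝ := ((y.1 - x.1) + (y.2 - x.2)) / 2 with ha
  set b : ℝ := ((y.1 - x.1) - (y.2 - x.2)) / 2 with hb
  have habs := abs_le.mp hxy
  have ha0 : 0 ≤ a := by simp only [ha]; linarith [habs.1]
  have hb0 : 0 ≤ b := by simp only [hb]; linarith [habs.2]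
  set m : ℝ × ℝ := x + a • ((1:ℝ), (1:ℝ)) with hm
  have hym : y = m + b • ((1:ℝ), (-1:ℝ)) := by
    apply Prod.ext <;> simp [hm, ha, hb, Prod.smul_mk] <;> ring
  have h1 : (α m - α x).PosSemidef :=
    seg_psd α hdiff hherm _ hu x a ha0
  have h2 : (α y - α m).PosSemidef := by
    rw [hym]
    exact seg_psd α hdiff hherm _ hv m b hb0
  have : α y - α x = (α y - α m) + (α m - α x) := by abel
  rw [this]
  exact h2.add h1
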